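/- For every infinite-dimensional Banach space (E, ‖·‖₁) there exists another norm ‖·‖₂ on E such that (E, ‖·‖₂) is also a Banach space but ‖·‖₁ and ‖·‖₂ are not equivalent. -/

import Mathlib

/-- `n` satisfies the axioms of a norm on the `𝕜`-vector space `E`. -/
def IsNormOn (𝕜 : Type*) {E : Type*} [RCLike 𝕜] [AddCommGroup E] [Module 𝕜 E]
    (n : E → ℝ) : Prop :=
  (∀ u : E, n u = 0 ↔ u = 0) ∧
  (∀ (a : 𝕜) (u : E), n (a • u) = ‖a‖ * n u) ∧
  (∀ u v : E, n (u + v) ≤ n u + n v)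

/-- `u` is a Cauchy sequence with respect to the norm function `n`. -/
def IsCauchyWith {E : Type*} [AddCommGroup E] (n : E → ℝ) (u : ℕ → E) : Prop :=
  ∀ ε > (0 : ℝ), ∃ N : ℕ, ∀ m ≥ N, ∀ k ≥ N, n (u m - u k) < ε

/-- `E` is complete with respect to the norm function `n`. -/
def CompleteWith {E : Type*} [AddCommGroup E] (n : E → ℝ) : Prop :=
  ∀ u : ℕ → E, IsCauchyWith n u →
    ∃ l : E, ∀ ε > (0 : ℝ), ∃ N : ℕ, ∀ m ≥ N, n (u m - l) < ε


lemma exists_unbounded_functional {𝕜 E : Type*} [RCLike 𝕜] [NormedAddCommGroup E]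
    [NormedSpace 𝕜 E] (h : ¬ FiniteDimensional 𝕜 E) :
    ∃ f : E →ₗ[𝕜] 𝕜, (∃ x₀ : E, f x₀ = 1) ∧
      ∀ c : ℝ, ∃ x : E, ‖f x‖ > c * ‖x‖ := by
  classical
  have b := Module.Basis.ofVectorSpace 𝕜 E
  set ι := Module.Basis.ofVectorSpaceIndex 𝕜 E
  have hinf : Infinite ι := by
    by_contra hfin
    rw [not_infinite_iff_finite] at hfin
    exact h (Module.Finite.of_basis b)
  obtain ⟨g, hg⟩ := Infinite.natEmbedding ι
  let f : E →ₗ[𝕜] 𝕜 := b.constr 𝕜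
    (Function.extend g (fun n => (((n : ℝ) + 1) * ‖b (g n)‖ : ℝ)) 0)
  have hfb : ∀ n : ℕ, f (b (g n)) = ((((n : ℝ) + 1) * ‖b (g n)‖ : ℝ) : 𝕜) := by
    intro n
    simp only [f, Module.Basis.constr_basis]
    rw [hg.extend_apply]
  have hbnorm : ∀ n : ℕ, ‖b (g n)‖ > 0 := fun n => norm_pos_iff.mpr (b.ne_zero (g n))
  refine ⟨f, ⟨(f (b (g 0)))⁻¹ • b (g 0), ?_⟩, ?_⟩
  · have h0 : f (b (g 0)) ≠ 0 := by
      rw [hfb 0]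
      exact RCLike.ofReal_ne_zero.mpr (mul_pos (by positivity) (hbnorm 0)).ne'
    simp [h0]
  · intro c
    refine ⟨b (g ⌈c⌉₊), ?_⟩
    rw [hfb, RCLike.norm_ofReal, abs_of_nonneg (by positivity)]
    have : c < (⌈c⌉₊ : ℝ) + 1 := lt_of_le_of_lt (Nat.le_ceil c) (by linarith)
    exact mul_lt_mul_of_pos_right this (hbnorm _)

theorem stmt8 {𝕜 E : Type*} [RCLike 𝕜] [NormedAddCommGroup E] [NormedSpace 𝕜 E]
    [CompleteSpace E] (h : ¬ FiniteDimensional 𝕜 E) :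
    ∃ n₂ : E → ℝ, IsNormOn 𝕜 n₂ ∧ CompleteWith n₂ ∧
      ¬ ∃ c₁ > (0 : ℝ), ∃ c₂ > (0 : ℝ), ∀ u : E, c₁ * ‖u‖ ≤ n₂ u ∧ n₂ u ≤ c₂ * ‖u‖ := by
  classical
  obtain ⟨f, ⟨x₀, hx₀⟩, hub⟩ := exists_unbounded_functional (𝕜 := 𝕜) (E := E) h
  -- the involution T x = x - 2 f(x) x₀
  let T : E →ₗ[𝕜] E :=
  { toFun := fun x => x - (2 * f x) • x₀
    map_add' := by
      intro x y
      simp only [map_add]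
      module
    map_smul' := by
      intro a x
      simp only [map_smul, RingHom.id_apply, smul_eq_mul]
      module }
  have hTdef : ∀ x : E, T x = x - (2 * f x) • x₀ := fun x => rfl
  have hfT : ∀ x : E, f (T x) = - f x := by
    intro x
    rw [hTdef]
    simp [hx₀]
    ring
  have hTT : ∀ x : E, T (T x) = x := by
    intro x
    rw [hTdef (T x), hfT, hTdef x]
    module
  have hTinj : Function.Injective T := Function.LeftInverse.injective hTT
  refine ⟨fun x => ‖T x‖, ⟨?_, ?_, ?_⟩, ?_, ?_⟩
  · intro u
    rw [norm_eq_zero]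
    constructor
    · intro hu
      have := congrArg T hu
      rwa [hTT, map_zero] at this
    · rintro rfl; exact map_zero T
  · intro a u; show ‖T (a • u)‖ = ‖a‖ * ‖T u‖; rw [map_smul, norm_smul]
  · intro u v; show ‖T (u + v)‖ ≤ ‖T u‖ + ‖T v‖; rw [map_add]; exact norm_add_le _ _
  · -- completeness
    intro u hu
    have hcs : CauchySeq (fun n => T (u n)) := by
      rw [Metric.cauchySeq_iff]
      intro ε hε
      obtain ⟨N, hN⟩ := hu ε hε
      refine ⟨N, fun m hm k hk => ?_⟩
      have := hN m hm k hk
      rwa [dist_eq_norm, ← map_sub]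
    obtain ⟨l, hl⟩ := cauchySeq_tendsto_of_complete hcs
    rw [Metric.tendsto_atTop] at hl
    refine ⟨T l, fun ε hε => ?_⟩
    obtain ⟨N, hN⟩ := hl ε hε
    refine ⟨N, fun m hm => ?_⟩
    have := hN m hm
    rw [dist_eq_norm] at this
    show ‖T (u m - T l)‖ < ε
    rwa [map_sub, hTT]
  · -- non-equivalence
    rintro ⟨c₁, hc₁, c₂, hc₂, hb⟩
    have hx₀ne : x₀ ≠ 0 := by
      intro h0
      rw [h0, map_zero] at hx₀
      exact one_ne_zero hx₀.symm
    have hx₀pos : (0:ℝ) < ‖x₀‖ := norm_pos_iff.mpr hx₀ne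
    obtain ⟨x, hx⟩ := hub ((1 + c₂) / (2 * ‖x₀‖))
    have h1 : (2 * ‖f x‖) * ‖x₀‖ ≤ (1 + c₂) * ‖x‖ := by
      have hnorm : ‖x - T x‖ = 2 * ‖f x‖ * ‖x₀‖ := by
        rw [hTdef, sub_sub_cancel, norm_smul, norm_mul, RCLike.norm_ofNat]
      have h2 : ‖x - T x‖ ≤ ‖x‖ + c₂ * ‖x‖ :=
        le_trans (norm_sub_le _ _) (by linarith [(hb x).2])
      calc (2 * ‖f x‖) * ‖x₀‖ = ‖x - T x‖ := hnorm.symm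
        _ ≤ ‖x‖ + c₂ * ‖x‖ := h2
        _ = (1 + c₂) * ‖x‖ := by ring
    have h3 : (1 + c₂) * ‖x‖ < (2 * ‖f x‖) * ‖x₀‖ := by
      have := mul_lt_mul_of_pos_right hx (by positivity : (0:ℝ) < 2 * ‖x₀‖)
      calc (1 + c₂) * ‖x‖ = ((1 + c₂) / (2 * ‖x₀‖) * ‖x‖) * (2 * ‖x₀‖) := by
            field_simp
        _ < ‖f x‖ * (2 * ‖x₀‖) := this
        _ = (2 * ‖f x‖) * ‖x₀‖ := by ring
    linarith
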